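/- For each N, define the truncation errors R^{n+1}_{Δt} = v(t_n) − T_{t_n}(Δt) S(Δt) v(t_{n+1}) for n = 0, …, N−1, where T_{t_n}(Δt)u denotes the unique û ∈ L²(ℝ^d) with û(x) + Δt·g(t_n, x, û(x)) = u(x) a.e. Then the implicit scheme is consistent: ∑_{n=0}^{N−1} ‖R^{n+1}_{Δt}‖ → 0 as N → ∞. -/

import Mathlib

open MeasureTheory Filter intervalIntegral

private lemma sg_cont_fixed {E : Type*} [NormedAddCommGroup E] [NormedSpace ℝ E]
    (S : ℝ → E →L[ℝ] E) (T M : ℝ) (hM : 1 ≤ M)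
    (hSadd : ∀ s t : ℝ, 0 ≤ s → 0 ≤ t → S (t + s) = (S t).comp (S s))
    (hSM : ∀ t ∈ Set.Icc (0:ℝ) T, ‖S t‖ ≤ M)
    (hScont : ∀ f : E, Tendsto (fun t : ℝ => S t f) (nhdsWithin 0 (Set.Ioi 0)) (nhds f))
    (f : E) : ContinuousOn (fun s => S s f) (Set.Icc 0 T) := by
  have hM0 : (0:ℝ) < M := lt_of_lt_of_le one_pos hM
  intro s₀ hs₀
  rw [Metric.continuousWithinAt_iff]
  intro ε hε
  obtain ⟨δ, hδ0, hδ⟩ := (Metric.tendsto_nhdsWithin_nhds).mp (hScont f) (ε / M) (by positivity)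
  refine ⟨δ, hδ0, fun s hs hdist => ?_⟩
  have hkey : ∀ u r : ℝ, 0 ≤ u → u ∈ Set.Icc (0:ℝ) T → 0 < r → dist r 0 < δ →
      dist (S (u + r) f) (S u f) < ε := by
    intro u r hu huT hr hrδ
    have hcomp := hSadd r u hr.le hu
    have h1 : dist (S (u + r) f) (S u f) = ‖S u (S r f - f)‖ := by
      rw [dist_eq_norm, hcomp]
      simp [map_sub]
    rw [h1]
    calc ‖S u (S r f - f)‖ ≤ ‖S u‖ * ‖S r f - f‖ := (S u).le_opNorm _
      _ ≤ M * ‖S r f - f‖ := by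
          apply mul_le_mul_of_nonneg_right (hSM u huT) (norm_nonneg _)
      _ < M * (ε / M) := by
          apply mul_lt_mul_of_pos_left _ hM0
          rw [← dist_eq_norm]
          exact hδ hr hrδ
      _ = ε := by field_simp
  rcases lt_trichotomy s s₀ with h | h | h
  · have := hkey s (s₀ - s) hs.1 ⟨hs.1, le_trans (by linarith) hs₀.2⟩ (by linarith)
      (by rw [Real.dist_eq] at hdist ⊢; rw [sub_zero, abs_of_pos (by linarith)]
          have h' := abs_lt.mp hdist; linarith [h'.1, h'.2])
    rw [show s + (s₀ - s) = s₀ by ring] at this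
    rw [dist_comm]
    exact this
  · simp [h, hε]
  · have := hkey s₀ (s - s₀) hs₀.1 hs₀ (by linarith)
      (by rw [Real.dist_eq] at hdist ⊢; rw [sub_zero, abs_of_pos (by linarith)]
          have h' := abs_lt.mp hdist; linarith [h'.1, h'.2])
    rw [show s₀ + (s - s₀) = s by ring] at this
    exact this

private lemma sg_cont_param {E : Type*} [NormedAddCommGroup E] [NormedSpace ℝ E]
    (S : ℝ → E →L[ℝ] E) (T M : ℝ) (hM : 1 ≤ M)
    (hSadd : ∀ s t : ℝ, 0 ≤ s → 0 ≤ t → S (t + s) = (S t).comp (S s))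
    (hSM : ∀ t ∈ Set.Icc (0:ℝ) T, ‖S t‖ ≤ M)
    (hScont : ∀ f : E, Tendsto (fun t : ℝ => S t f) (nhdsWithin 0 (Set.Ioi 0)) (nhds f))
    (p : ℝ → ℝ) (q : ℝ → E) (s : Set ℝ)
    (hp : ContinuousOn p s) (hmaps : ∀ τ ∈ s, p τ ∈ Set.Icc (0:ℝ) T)
    (hq : ContinuousOn q s) :
    ContinuousOn (fun τ => S (p τ) (q τ)) s := by
  have hM0 : (0:ℝ) < M := lt_of_lt_of_le one_pos hM
  intro τ₀ hτ₀
  have hA : ContinuousWithinAt (fun τ => S (p τ) (q τ₀)) s τ₀ :=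
    ((sg_cont_fixed S T M hM hSadd hSM hScont (q τ₀)).comp hp hmaps) τ₀ hτ₀
  rw [Metric.continuousWithinAt_iff]
  intro ε hε
  obtain ⟨δ₁, hδ₁0, hδ₁⟩ := Metric.continuousWithinAt_iff.mp hA (ε / 2) (by positivity)
  obtain ⟨δ₂, hδ₂0, hδ₂⟩ := Metric.continuousWithinAt_iff.mp (hq τ₀ hτ₀) (ε / (2 * M)) (by positivity)
  refine ⟨min δ₁ δ₂, by positivity, fun τ hτ hd => ?_⟩
  have hd₁ : dist τ τ₀ < δ₁ := lt_of_lt_of_le hd (min_le_left _ _)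
  have hd₂ : dist τ τ₀ < δ₂ := lt_of_lt_of_le hd (min_le_right _ _)
  have h1 : dist (S (p τ) (q τ)) (S (p τ) (q τ₀)) ≤ M * dist (q τ) (q τ₀) := by
    rw [dist_eq_norm, ← map_sub, dist_eq_norm]
    calc ‖S (p τ) (q τ - q τ₀)‖ ≤ ‖S (p τ)‖ * ‖q τ - q τ₀‖ := (S (p τ)).le_opNorm _
      _ ≤ M * ‖q τ - q τ₀‖ :=
          mul_le_mul_of_nonneg_right (hSM _ (hmaps τ hτ)) (norm_nonneg _)
  have h2 : M * dist (q τ) (q τ₀) < ε / 2 := by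
    have := hδ₂ hτ hd₂
    calc M * dist (q τ) (q τ₀) < M * (ε / (2 * M)) := mul_lt_mul_of_pos_left this hM0
      _ = ε / 2 := by field_simp
  have h3 := hδ₁ hτ hd₁
  calc dist (S (p τ) (q τ)) (S (p τ₀) (q τ₀))
      ≤ dist (S (p τ) (q τ)) (S (p τ) (q τ₀)) + dist (S (p τ) (q τ₀)) (S (p τ₀) (q τ₀)) :=
        dist_triangle _ _ _
    _ < ε := by linarith


private lemma stepA_aux {α : Type*} [MeasurableSpace α] {μ : Measure α}
    (w ts sv gvw : Lp ℝ 2 μ) (Δ : ℝ) (hΔ : 0 ≤ Δ) (G : α → ℝ → ℝ) (γ : ℝ)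
    (hmono : ∀ x (a b : ℝ), γ * (a - b)^2 ≤ (G x a - G x b) * (a - b))
    (hγ : |γ| * Δ ≤ 1/2)
    (h1 : ∀ᵐ x ∂μ, (↑↑ts : α → ℝ) x + Δ * G x ((↑↑ts : α → ℝ) x) = (↑↑sv : α → ℝ) x)
    (h2 : ∀ᵐ x ∂μ, (↑↑gvw : α → ℝ) x = G x ((↑↑w : α → ℝ) x)) :
    ‖w - ts‖ ≤ 2 * ‖sv - w - Δ • gvw‖ := by
  have hae : ∀ᵐ x ∂μ, ‖(↑↑(w - ts) : α → ℝ) x‖ ≤ ‖(↑↑((2:ℝ) • (sv - w - Δ • gvw)) : α → ℝ) x‖ := by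
    filter_upwards [h1, h2, Lp.coeFn_sub sv w, Lp.coeFn_sub (sv - w) (Δ • gvw),
      Lp.coeFn_smul Δ gvw, Lp.coeFn_sub w ts, Lp.coeFn_smul (2:ℝ) (sv - w - Δ • gvw)]
      with x hx1 hx2 hx3 hx4 hx5 hx6 hx7
    have hEx : (↑↑(sv - w - Δ • gvw) : α → ℝ) x
        = (↑↑sv : α → ℝ) x - (↑↑w : α → ℝ) x - Δ * (↑↑gvw : α → ℝ) x := by
      rw [hx4]
      simp only [Pi.sub_apply, hx3, hx5, Pi.smul_apply, smul_eq_mul]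
    set z : ℝ := (↑↑ts : α → ℝ) x - (↑↑w : α → ℝ) x with hz
    set E : ℝ := (↑↑sv : α → ℝ) x - (↑↑w : α → ℝ) x - Δ * (↑↑gvw : α → ℝ) x with hE
    have hEz : E = z + Δ * (G x ((↑↑ts : α → ℝ) x) - G x ((↑↑w : α → ℝ) x)) := by
      rw [hE, ← hx1, hx2]; ring
    have hmono' : γ * z^2 ≤ (G x ((↑↑ts : α → ℝ) x) - G x ((↑↑w : α → ℝ) x)) * z :=
      hmono x ((↑↑ts : α → ℝ) x) ((↑↑w : α → ℝ) x)
    clear_value z E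
    have hγΔ : -(1/2 : ℝ) ≤ γ * Δ := by
      have h := mul_le_mul_of_nonneg_right (neg_abs_le γ) hΔ
      linarith
    have hq : (1/2) * z^2 ≤ E * z := by
      have h1' : Δ * (γ * z^2) ≤ Δ * ((G x ((↑↑ts : α → ℝ) x) - G x ((↑↑w : α → ℝ) x)) * z) :=
        mul_le_mul_of_nonneg_left hmono' hΔ
      have h2' : -(1/2) * z^2 ≤ (γ*Δ) * z^2 := mul_le_mul_of_nonneg_right hγΔ (sq_nonneg z)
      calc (1/2)*z^2 = z^2 + (-(1/2))*z^2 := by ring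
        _ ≤ z^2 + (γ*Δ)*z^2 := by linarith
        _ = z^2 + Δ*(γ*z^2) := by ring
        _ ≤ z^2 + Δ*((G x ((↑↑ts : α → ℝ) x) - G x ((↑↑w : α → ℝ) x)) * z) := by linarith
        _ = E*z := by rw [hEz]; ring
    have habs : (1/2) * z^2 ≤ |E| * |z| := by
      refine hq.trans ((le_abs_self _).trans (le_of_eq (abs_mul E z)))
    have hzabs : |z| ≤ 2 * |E| := by
      rcases eq_or_lt_of_le (abs_nonneg z) with h0 | h0
      · rw [← h0]; positivity
      · have hsq : |z| * |z| ≤ (2*|E|) * |z| := by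
          have hzz : |z| * |z| = z^2 := by rw [← sq, sq_abs]
          rw [hzz]
          nlinarith [habs, abs_nonneg z, abs_nonneg E, hzz]
        exact le_of_mul_le_mul_right hsq h0
    rw [hx6, hx7]
    simp only [Pi.sub_apply, Pi.smul_apply, smul_eq_mul, Real.norm_eq_abs]
    rw [hEx]
    have h5 : |(↑↑w : α → ℝ) x - (↑↑ts : α → ℝ) x| = |z| := by rw [hz, abs_sub_comm]
    rw [h5, abs_mul]
    simpa using hzabs
  have h8 : eLpNorm (↑↑(w - ts) : α → ℝ) 2 μ ≤ eLpNorm (↑↑((2:ℝ) • (sv - w - Δ • gvw)) : α → ℝ) 2 μ :=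
    eLpNorm_mono_ae hae
  have h9 : ‖w - ts‖ ≤ ‖(2:ℝ) • (sv - w - Δ • gvw)‖ := by
    rw [Lp.norm_def, Lp.norm_def]
    exact ENNReal.toReal_mono (Lp.eLpNorm_ne_top _) h8
  rw [norm_smul] at h9
  simpa using h9

set_option maxHeartbeats 2000000

/-- Consistency of the semi-discrete implicit scheme for a maximal monotone driver:
with `R^{n+1}_{Δt} = v(t_n) - T_{t_n}(Δt) S(Δt) v(t_{n+1})`, where `T_{t_n}(Δt)u` is the
unique `û ∈ L²` with `û + Δt g(t_n,·,û) = u` a.e., one has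
`∑_{n=0}^{N-1} ‖R^{n+1}_{Δt}‖ → 0` as `N → ∞`. -/
theorem implicit_scheme_consistency
    (d : ℕ) (hd : 1 ≤ d) (T : ℝ) (hT : 0 < T)
    (S : ℝ → (Lp ℝ 2 (volume : Measure (Fin d → ℝ)) →L[ℝ]
              Lp ℝ 2 (volume : Measure (Fin d → ℝ))))
    (hS0 : S 0 = ContinuousLinearMap.id ℝ _)
    (hSadd : ∀ s t : ℝ, 0 ≤ s → 0 ≤ t → S (t + s) = (S t).comp (S s))
    (hScont : ∀ f : Lp ℝ 2 (volume : Measure (Fin d → ℝ)),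
      Tendsto (fun t : ℝ => S t f) (nhdsWithin 0 (Set.Ioi 0)) (nhds f))
    (M : ℝ) (hM : 1 ≤ M) (hSM : ∀ t ∈ Set.Icc (0:ℝ) T, ‖S t‖ ≤ M)
    (g : ℝ → (Fin d → ℝ) → ℝ → ℝ)
    (hg_meas : Measurable fun p : ℝ × (Fin d → ℝ) × ℝ => g p.1 p.2.1 p.2.2)
    (γ : ℝ)
    (hg_mono : ∀ t ∈ Set.Ico (0:ℝ) T, ∀ x : Fin d → ℝ, ∀ a b : ℝ,
      γ * (a - b) ^ 2 ≤ (g t x a - g t x b) * (a - b))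
    (hg_lip : ∀ c : ℝ, 0 ≤ c → ∃ Lc : ℝ, 0 < Lc ∧
      ∀ t₁ ∈ Set.Ico (0:ℝ) T, ∀ t₂ ∈ Set.Ico (0:ℝ) T,
        ∀ u w : (Fin d → ℝ) → ℝ,
          MemLp u 2 (volume : Measure (Fin d → ℝ)) →
          MemLp w 2 (volume : Measure (Fin d → ℝ)) →
          eLpNorm u 2 (volume : Measure (Fin d → ℝ)) ≤ ENNReal.ofReal c →
          eLpNorm w 2 (volume : Measure (Fin d → ℝ)) ≤ ENNReal.ofReal c →
          eLpNorm (fun x => g t₁ x (u x) - g t₂ x (w x)) 2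
              (volume : Measure (Fin d → ℝ)) ≤
            ENNReal.ofReal (Lc * (|t₁ - t₂| +
              (eLpNorm (fun x => u x - w x) 2 (volume : Measure (Fin d → ℝ))).toReal)))
    (hg0 : MemLp (fun x : Fin d → ℝ => g 0 x 0) 2 (volume : Measure (Fin d → ℝ)))
    (hg_range : ∀ t ∈ Set.Ico (0:ℝ) T, ∀ x : Fin d → ℝ, ∀ lam : ℝ, 0 < lam →
      Function.Surjective fun y : ℝ => y + lam * g t x y)
    -- the mild solution, with `Gv τ` the Nemytskii composition `g(τ,·,v(τ,·))` in `L²`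
    (v : ℝ → Lp ℝ 2 (volume : Measure (Fin d → ℝ)))
    (hv_cont : ContinuousOn v (Set.Icc 0 T))
    (Gv : ℝ → Lp ℝ 2 (volume : Measure (Fin d → ℝ)))
    (hGv : ∀ τ ∈ Set.Icc (0:ℝ) T,
      ∀ᵐ x ∂(volume : Measure (Fin d → ℝ)), Gv τ x = g τ x (v τ x))
    (hv_mild : ∀ s t : ℝ, 0 ≤ s → s ≤ t → t ≤ T →
      v s = S (t - s) (v t) - ∫ τ in s..t, S (τ - s) (Gv τ))
    (φ : Lp ℝ 2 (volume : Measure (Fin d → ℝ))) (hφ : v T = φ)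
    -- the resolvent values `TS N n = T_{t_n}(Δt) S(Δt) v(t_{n+1})`
    (TS : ℕ → ℕ → Lp ℝ 2 (volume : Measure (Fin d → ℝ)))
    (hTS : ∀ N : ℕ, |γ| * (T / N) ≤ 1 / 2 → ∀ n < N,
      ∀ᵐ x ∂(volume : Measure (Fin d → ℝ)),
        TS N n x + (T / N) * g ((n : ℝ) * (T / N)) x (TS N n x) =
          (S (T / N) (v (((n : ℝ) + 1) * (T / N)))) x) :
    Tendsto (fun N : ℕ => ∑ n ∈ Finset.range N,
      ‖v ((n : ℝ) * (T / N)) - TS N n‖) atTop (nhds 0) := by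
  classical
  have hM0 : (0:ℝ) < M := lt_of_lt_of_le one_pos hM
  -- uniform bound on v
  obtain ⟨Cv, hCv⟩ := isCompact_Icc.exists_bound_of_continuousOn hv_cont
  set c : ℝ := max Cv 0 with hc_def
  have hc0 : 0 ≤ c := le_max_right _ _
  obtain ⟨Lc, hLc0, hLc⟩ := hg_lip c hc0
  have hvc : ∀ t ∈ Set.Icc (0:ℝ) T,
      eLpNorm (↑↑(v t) : (Fin d → ℝ) → ℝ) 2 (volume : Measure (Fin d → ℝ)) ≤ ENNReal.ofReal c := by
    intro t ht
    have h1 : eLpNorm (↑↑(v t) : (Fin d → ℝ) → ℝ) 2 volume = ENNReal.ofReal ‖v t‖ := by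
      rw [Lp.norm_def, ENNReal.ofReal_toReal (Lp.eLpNorm_ne_top _)]
    rw [h1]
    exact ENNReal.ofReal_le_ofReal ((hCv t ht).trans (le_max_left _ _))
  -- Lipschitz-type modulus for Gv
  have hGv_lip : ∀ t₁ ∈ Set.Ico (0:ℝ) T, ∀ t₂ ∈ Set.Ico (0:ℝ) T,
      ‖Gv t₁ - Gv t₂‖ ≤ Lc * (|t₁ - t₂| + ‖v t₁ - v t₂‖) := by
    intro t₁ ht₁ t₂ ht₂
    have he : (↑↑(Gv t₁ - Gv t₂) : (Fin d → ℝ) → ℝ) =ᵐ[volume]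
        (fun x => g t₁ x ((↑↑(v t₁) : (Fin d → ℝ) → ℝ) x) - g t₂ x ((↑↑(v t₂) : (Fin d → ℝ) → ℝ) x)) := by
      filter_upwards [Lp.coeFn_sub (Gv t₁) (Gv t₂), hGv t₁ (Set.Ico_subset_Icc_self ht₁),
        hGv t₂ (Set.Ico_subset_Icc_self ht₂)] with x hx h1 h2
      rw [hx]; simp [h1, h2]
    have hvv : eLpNorm (fun x => (↑↑(v t₁) : (Fin d → ℝ) → ℝ) x - (↑↑(v t₂) : (Fin d → ℝ) → ℝ) x) 2
        (volume : Measure (Fin d → ℝ)) = eLpNorm (↑↑(v t₁ - v t₂) : (Fin d → ℝ) → ℝ) 2 volume := by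
      apply eLpNorm_congr_ae
      filter_upwards [Lp.coeFn_sub (v t₁) (v t₂)] with x hx
      rw [hx]; simp
    have hest := hLc t₁ ht₁ t₂ ht₂ (↑↑(v t₁)) (↑↑(v t₂)) (by exact Lp.memLp _) (by exact Lp.memLp _)
      (by exact hvc t₁ (Set.Ico_subset_Icc_self ht₁)) (by exact hvc t₂ (Set.Ico_subset_Icc_self ht₂))
    rw [Lp.norm_def, eLpNorm_congr_ae he]
    refine le_trans (ENNReal.toReal_mono ENNReal.ofReal_ne_top hest) (le_of_eq ?_)
    rw [ENNReal.toReal_ofReal (mul_nonneg hLc0.le (add_nonneg (abs_nonneg _) ENNReal.toReal_nonneg)),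
      hvv, ← Lp.norm_def]
  -- continuity of Gv on [0,T)
  have hGv_cont : ContinuousOn Gv (Set.Ico 0 T) := by
    intro t₀ ht₀
    have hv' := (hv_cont.mono Set.Ico_subset_Icc_self) t₀ ht₀
    rw [Metric.continuousWithinAt_iff] at hv' ⊢
    intro ε hε
    obtain ⟨δ, hδ0, hδ⟩ := hv' (ε / (2 * Lc)) (by positivity)
    refine ⟨min δ (ε / (2 * Lc)), by positivity, fun t ht hd => ?_⟩
    have h2 : dist (v t) (v t₀) < ε / (2 * Lc) := hδ ht (lt_of_lt_of_le hd (min_le_left _ _))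
    have h3 : |t - t₀| < ε / (2 * Lc) := by
      rw [Real.dist_eq] at hd; exact lt_of_lt_of_le hd (min_le_right _ _)
    rw [dist_eq_norm] at h2 ⊢
    calc ‖Gv t - Gv t₀‖ ≤ Lc * (|t - t₀| + ‖v t - v t₀‖) := hGv_lip t ht t₀ ht₀
      _ < Lc * (ε / (2 * Lc) + ε / (2 * Lc)) := by
          apply mul_lt_mul_of_pos_left _ hLc0; linarith
      _ = ε := by field_simp; ring
  -- uniform bound on Gv
  obtain ⟨CG, hCG0, hCGbd⟩ : ∃ CG : ℝ, 0 ≤ CG ∧ ∀ t ∈ Set.Ico (0:ℝ) T, ‖Gv t‖ ≤ CG := by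
    refine ⟨Lc * (T + c) + (eLpNorm (fun x : Fin d → ℝ => g 0 x 0) 2 volume).toReal,
      add_nonneg (mul_nonneg hLc0.le (by linarith)) ENNReal.toReal_nonneg, ?_⟩
    intro t ht
    have he : (↑↑(Gv t) : (Fin d → ℝ) → ℝ) =ᵐ[volume]
        ((fun x => g t x ((↑↑(v t) : (Fin d → ℝ) → ℝ) x) - g 0 x 0) + (fun x : Fin d → ℝ => g 0 x 0)) := by
      filter_upwards [hGv t (Set.Ico_subset_Icc_self ht)] with x hx
      rw [hx]; simp
    have hmeas1 : AEStronglyMeasurable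
        (fun x => g t x ((↑↑(v t) : (Fin d → ℝ) → ℝ) x) - g 0 x 0) (volume : Measure (Fin d → ℝ)) := by
      refine ((Lp.aestronglyMeasurable (Gv t)).sub hg0.aestronglyMeasurable).congr ?_
      filter_upwards [hGv t (Set.Ico_subset_Icc_self ht)] with x hx
      simp [hx]
    have hest : eLpNorm (fun x => g t x ((↑↑(v t) : (Fin d → ℝ) → ℝ) x) - g 0 x 0) 2
        (volume : Measure (Fin d → ℝ)) ≤ ENNReal.ofReal (Lc * (|t| + ‖v t‖)) := by
      have h0 := hLc t ht 0 ⟨le_refl 0, hT⟩ (↑↑(v t)) (fun _ => 0) (by exact Lp.memLp _)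
        (by simpa using zero_memLp) (by exact hvc t (Set.Ico_subset_Icc_self ht)) (by simp)
      simpa [← Lp.norm_def] using h0
    have hsub : eLpNorm (↑↑(Gv t) : (Fin d → ℝ) → ℝ) 2 (volume : Measure (Fin d → ℝ)) ≤
        ENNReal.ofReal (Lc * (T + c)) + eLpNorm (fun x : Fin d → ℝ => g 0 x 0) 2 volume := by
      rw [eLpNorm_congr_ae he]
      refine le_trans (eLpNorm_add_le hmeas1 hg0.aestronglyMeasurable (by norm_num)) ?_
      refine add_le_add_left (le_trans hest (ENNReal.ofReal_le_ofReal ?_)) _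
      have ht1 : |t| ≤ T := by rw [abs_of_nonneg ht.1]; exact ht.2.le
      have ht2 : ‖v t‖ ≤ c := (hCv t ⟨ht.1, ht.2.le⟩).trans (le_max_left _ _)
      nlinarith
    rw [Lp.norm_def]
    calc (eLpNorm (↑↑(Gv t) : (Fin d → ℝ) → ℝ) 2 volume).toReal
        ≤ (ENNReal.ofReal (Lc * (T + c)) + eLpNorm (fun x : Fin d → ℝ => g 0 x 0) 2 volume).toReal :=
          ENNReal.toReal_mono (ENNReal.add_ne_top.mpr ⟨ENNReal.ofReal_ne_top, hg0.2.ne⟩) hsub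
      _ = (ENNReal.ofReal (Lc * (T + c))).toReal + (eLpNorm (fun x : Fin d → ℝ => g 0 x 0) 2 volume).toReal :=
          ENNReal.toReal_add ENNReal.ofReal_ne_top hg0.2.ne
      _ ≤ Lc * (T + c) + (eLpNorm (fun x : Fin d → ℝ => g 0 x 0) 2 volume).toReal := by
          rw [ENNReal.toReal_ofReal (mul_nonneg hLc0.le (by linarith))]
  -- strong continuity up to the boundary
  have hScont' : ∀ f : Lp ℝ 2 (volume : Measure (Fin d → ℝ)),
      Tendsto (fun t : ℝ => S t f) (nhdsWithin 0 (Set.Ici 0)) (nhds f) := by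
    intro f
    have h1 : Set.Ici (0:ℝ) = {0} ∪ Set.Ioi 0 := by
      ext x; simp [le_iff_lt_or_eq, Set.mem_Ioi, eq_comm, or_comm]
    rw [h1, nhdsWithin_union]
    refine tendsto_sup.mpr ⟨?_, hScont f⟩
    rw [nhdsWithin_singleton]
    have h2 : S 0 f = f := by rw [hS0]; rfl
    have h3 : Tendsto (fun t : ℝ => S t f) (pure 0) (nhds (S 0 f)) :=
      tendsto_pure_nhds (fun t : ℝ => S t f) 0
    rwa [h2] at h3
  have hae_ne : ∀ x₀ : ℝ, ∀ᵐ τ : ℝ ∂(volume : Measure ℝ), τ ≠ x₀ := by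
    intro x₀
    refine ae_iff.mpr ?_
    have : {τ : ℝ | ¬ τ ≠ x₀} = {x₀} := by ext; simp
    rw [this]; exact measure_singleton _
  -- the grid projection and the local truncation error density
  set θ : ℕ → ℝ → ℝ := fun N τ => ((⌊τ * N / T⌋.toNat : ℕ) : ℝ) * (T / N) with hθ_def
  set Φ : ℕ → ℝ → ℝ := fun N τ => ‖S (τ - θ N τ) (Gv τ) - Gv (θ N τ)‖ with hΦ_def
  have hθ_facts : ∀ N : ℕ, 1 ≤ N → ∀ τ ∈ Set.Ioo (0:ℝ) T,
      0 ≤ θ N τ ∧ θ N τ ≤ τ ∧ τ < θ N τ + T / N ∧ ⌊τ * N / T⌋.toNat < N := by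
    intro N hN1 τ hτ
    have hNpos : (0:ℝ) < N := by exact_mod_cast hN1
    have hΔ : 0 < T / N := div_pos hT hNpos
    have hx0 : 0 < τ * N / T := div_pos (mul_pos hτ.1 hNpos) hT
    have hk0 : (0:ℤ) ≤ ⌊τ * N / T⌋ := Int.floor_nonneg.mpr hx0.le
    have hcast : ((⌊τ * (N:ℝ) / T⌋.toNat : ℕ) : ℝ) = ((⌊τ * (N:ℝ) / T⌋ : ℤ) : ℝ) := by
      exact_mod_cast Int.toNat_of_nonneg hk0
    have hθτ : θ N τ = ((⌊τ * (N:ℝ) / T⌋ : ℤ) : ℝ) * (T / N) := by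
      simp only [hθ_def]; rw [hcast]
    have hxτ : (τ * N / T) * (T / N) = τ := by field_simp
    refine ⟨?_, ?_, ?_, ?_⟩
    · rw [hθτ]
      have : (0:ℝ) ≤ ((⌊τ * (N:ℝ) / T⌋ : ℤ) : ℝ) := by exact_mod_cast hk0
      exact mul_nonneg this hΔ.le
    · rw [hθτ]
      calc ((⌊τ * (N:ℝ) / T⌋ : ℤ) : ℝ) * (T / N) ≤ (τ * N / T) * (T / N) :=
            mul_le_mul_of_nonneg_right (Int.floor_le _) hΔ.le
        _ = τ := hxτ
    · rw [hθτ]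
      have h1 := Int.lt_floor_add_one (τ * (N:ℝ) / T)
      have h2 := mul_lt_mul_of_pos_right h1 hΔ
      calc τ = (τ * N / T) * (T / N) := hxτ.symm
        _ < (((⌊τ * (N:ℝ) / T⌋ : ℤ) : ℝ) + 1) * (T / N) := h2
        _ = ((⌊τ * (N:ℝ) / T⌋ : ℤ) : ℝ) * (T / N) + T / N := by ring
    · have hxN : τ * N / T < N := by
        rw [div_lt_iff₀ hT]
        calc τ * N < T * N := mul_lt_mul_of_pos_right hτ.2 hNpos
          _ = (N:ℝ) * T := by ring
      have : ⌊τ * (N:ℝ) / T⌋ < (N:ℤ) := Int.floor_lt.mpr (by exact_mod_cast hxN)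
      omega
  have hθ_grid : ∀ N : ℕ, ∀ n : ℕ, ∀ τ : ℝ, (n:ℝ) * (T / N) < τ → τ < ((n:ℝ)+1) * (T / N) →
      θ N τ = (n:ℝ) * (T / N) := by
    intro N n τ h1 h2
    have hΔ : 0 < T / N := by nlinarith
    have hN0 : (N:ℝ) ≠ 0 := by
      intro h; rw [h] at hΔ; simp at hΔ
    have hNpos : (0:ℝ) < N := lt_of_le_of_ne (Nat.cast_nonneg N) (Ne.symm hN0)
    have hlow : ((n:ℤ) : ℝ) ≤ τ * N / T := by
      rw [le_div_iff₀ hT]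
      have := mul_lt_mul_of_pos_right h1 hNpos
      have heq : (n:ℝ) * (T / N) * N = (n:ℝ) * T := by field_simp
      push_cast
      nlinarith
    have hhigh : τ * N / T < ((n:ℤ) : ℝ) + 1 := by
      rw [div_lt_iff₀ hT]
      have := mul_lt_mul_of_pos_right h2 hNpos
      have heq : ((n:ℝ)+1) * (T / N) * N = ((n:ℝ)+1) * T := by field_simp
      push_cast
      nlinarith
    have hfl : ⌊τ * (N:ℝ) / T⌋ = (n : ℤ) := Int.floor_eq_iff.mpr ⟨hlow, hhigh⟩
    simp only [hθ_def]
    rw [hfl]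
    simp
  have hFn_cont : ∀ r ∈ Set.Icc (0:ℝ) T, ContinuousOn (fun τ => S (τ - r) (Gv τ)) (Set.Ico r T) := by
    intro r hr
    refine sg_cont_param S T M hM hSadd hSM hScont (fun τ => τ - r) Gv (Set.Ico r T)
      ((continuous_id.sub continuous_const).continuousOn) ?_ (hGv_cont.mono ?_)
    · intro τ hτ
      have hmem : τ - r ∈ Set.Icc (0:ℝ) T :=
        ⟨sub_nonneg.mpr hτ.1, by have := hτ.2; have := hr.1; linarith⟩
      exact hmem
    · intro τ hτ
      exact ⟨le_trans hr.1 hτ.1, hτ.2⟩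
  have hΦ_int_piece : ∀ N : ℕ, 1 ≤ N → ∀ n : ℕ, n < N →
      IntervalIntegrable (fun τ => S (τ - (n:ℝ)*(T/N)) (Gv τ)) volume ((n:ℝ)*(T/N)) (((n:ℝ)+1)*(T/N)) := by
    intro N hN1 n hn
    have hNpos : (0:ℝ) < N := by exact_mod_cast hN1
    have hΔ : 0 < T / N := div_pos hT hNpos
    have htn0 : (0:ℝ) ≤ (n:ℝ)*(T/N) := by positivity
    have htn1T : ((n:ℝ)+1)*(T/N) ≤ T := by
      have h1 : ((n:ℝ)+1) ≤ N := by exact_mod_cast hn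
      calc ((n:ℝ)+1)*(T/N) ≤ (N:ℝ)*(T/N) := mul_le_mul_of_nonneg_right h1 hΔ.le
        _ = T := by field_simp
    have htnT : (n:ℝ)*(T/N) < T := by nlinarith
    have hle : (n:ℝ)*(T/N) ≤ ((n:ℝ)+1)*(T/N) := by nlinarith
    rw [intervalIntegrable_iff_integrableOn_Ioc_of_le hle, integrableOn_Ioc_iff_integrableOn_Ioo]
    have hsub : Set.Ioo ((n:ℝ)*(T/N)) (((n:ℝ)+1)*(T/N)) ⊆ Set.Ico ((n:ℝ)*(T/N)) T :=
      fun τ hτ => ⟨hτ.1.le, lt_of_lt_of_le hτ.2 htn1T⟩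
    have hcont := (hFn_cont ((n:ℝ)*(T/N)) ⟨htn0, htnT.le⟩).mono hsub
    refine Integrable.mono' (integrable_const (M * CG)) (hcont.aestronglyMeasurable measurableSet_Ioo) ?_
    refine ae_restrict_of_forall_mem measurableSet_Ioo (fun τ hτ => ?_)
    have hτ1 : (n:ℝ)*(T/N) ≤ τ := hτ.1.le
    have hτ2 : τ < T := lt_of_lt_of_le hτ.2 htn1T
    have hτIco : τ ∈ Set.Ico (0:ℝ) T := ⟨le_trans htn0 hτ1, hτ2⟩
    calc ‖S (τ - (n:ℝ)*(T/N)) (Gv τ)‖ ≤ ‖S (τ - (n:ℝ)*(T/N))‖ * ‖Gv τ‖ :=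
          (S _).le_opNorm _
      _ ≤ M * CG := mul_le_mul (hSM _ ⟨sub_nonneg.mpr hτ1, by linarith⟩) (hCGbd τ hτIco)
          (norm_nonneg _) hM0.le
  have hΦ_bound : ∀ N : ℕ, 1 ≤ N → ∀ τ ∈ Set.Ioo (0:ℝ) T, Φ N τ ≤ M * CG + CG := by
    intro N hN1 τ hτ
    obtain ⟨hθ0, hθle, -, -⟩ := hθ_facts N hN1 τ hτ
    have hθT : θ N τ < T := lt_of_le_of_lt hθle hτ.2
    simp only [hΦ_def]
    calc ‖S (τ - θ N τ) (Gv τ) - Gv (θ N τ)‖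
        ≤ ‖S (τ - θ N τ) (Gv τ)‖ + ‖Gv (θ N τ)‖ := norm_sub_le _ _
      _ ≤ M * CG + CG := by
          refine add_le_add ?_ (hCGbd _ ⟨hθ0, hθT⟩)
          calc ‖S (τ - θ N τ) (Gv τ)‖ ≤ ‖S (τ - θ N τ)‖ * ‖Gv τ‖ := (S _).le_opNorm _
            _ ≤ M * CG := mul_le_mul (hSM _ ⟨sub_nonneg.mpr hθle, by have := hτ.2; linarith⟩)
                (hCGbd τ ⟨hτ.1.le, hτ.2⟩) (norm_nonneg _) hM0.le
  have hΦ_tendsto : ∀ τ ∈ Set.Ioo (0:ℝ) T, Tendsto (fun N : ℕ => Φ N τ) atTop (nhds 0) := by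
    intro τ hτ
    have hθtend : Tendsto (fun N : ℕ => θ N τ) atTop (nhds τ) := by
      apply tendsto_of_tendsto_of_tendsto_of_le_of_le' (g := fun N : ℕ => τ - T/(N:ℝ))
          (h := fun _ : ℕ => τ)
      · have := (tendsto_const_nhds : Tendsto (fun _ : ℕ => τ) atTop (nhds τ)).sub
          (tendsto_const_div_atTop_nhds_zero_nat T)
        simpa using this
      · exact tendsto_const_nhds
      · filter_upwards [eventually_ge_atTop 1] with N hN1
        have := (hθ_facts N hN1 τ hτ).2.2.1
        linarith
      · filter_upwards [eventually_ge_atTop 1] with N hN1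
        exact (hθ_facts N hN1 τ hτ).2.1
    have hstend : Tendsto (fun N : ℕ => S (τ - θ N τ) (Gv τ)) atTop (nhds (Gv τ)) := by
      have hs0 : Tendsto (fun N : ℕ => τ - θ N τ) atTop (nhdsWithin 0 (Set.Ici 0)) := by
        rw [tendsto_nhdsWithin_iff]
        constructor
        · have := (tendsto_const_nhds : Tendsto (fun _ : ℕ => τ) atTop (nhds τ)).sub hθtend
          simpa using this
        · filter_upwards [eventually_ge_atTop 1] with N hN1
          exact sub_nonneg.mpr (hθ_facts N hN1 τ hτ).2.1
      exact (hScont' (Gv τ)).comp hs0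
    have hgvtend : Tendsto (fun N : ℕ => Gv (θ N τ)) atTop (nhds (Gv τ)) := by
      have htw : Tendsto (fun N : ℕ => θ N τ) atTop (nhdsWithin τ (Set.Ico 0 T)) := by
        rw [tendsto_nhdsWithin_iff]
        refine ⟨hθtend, ?_⟩
        filter_upwards [eventually_ge_atTop 1] with N hN1
        obtain ⟨h0, hle, -, -⟩ := hθ_facts N hN1 τ hτ
        exact ⟨h0, lt_of_le_of_lt hle hτ.2⟩
      exact ((hGv_cont τ ⟨hτ.1.le, hτ.2⟩).tendsto).comp htw
    have hcomb : Tendsto (fun N : ℕ => Φ N τ) atTop (nhds ‖(Gv τ) - (Gv τ)‖) := by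
      simp only [hΦ_def]
      exact (hstend.sub hgvtend).norm
    simpa using hcomb
  have hΦ_meas : ∀ N : ℕ, 1 ≤ N → AEStronglyMeasurable (Φ N) (volume.restrict (Set.Ioc (0:ℝ) T)) := by
    intro N hN1
    have hNpos : (0:ℝ) < N := by exact_mod_cast hN1
    have hΔ : 0 < T / N := div_pos hT hNpos
    set s : ℕ → Set ℝ := fun n => if n < N then Set.Ioo ((n:ℝ)*(T/N)) (((n:ℝ)+1)*(T/N)) else ∅ with hs_def
    have hsm : ∀ n, AEStronglyMeasurable (Φ N) (volume.restrict (s n)) := by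
      intro n
      by_cases hn : n < N
      · have hsn : s n = Set.Ioo ((n:ℝ)*(T/N)) (((n:ℝ)+1)*(T/N)) := by
          simp only [hs_def, if_pos hn]
        rw [hsn]
        have htn0 : (0:ℝ) ≤ (n:ℝ)*(T/N) := by positivity
        have htn1T : ((n:ℝ)+1)*(T/N) ≤ T := by
          have h1 : ((n:ℝ)+1) ≤ N := by exact_mod_cast hn
          calc ((n:ℝ)+1)*(T/N) ≤ (N:ℝ)*(T/N) := mul_le_mul_of_nonneg_right h1 hΔ.le
            _ = T := by field_simp
        have htnT : (n:ℝ)*(T/N) < T := by nlinarith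
        have hsub : Set.Ioo ((n:ℝ)*(T/N)) (((n:ℝ)+1)*(T/N)) ⊆ Set.Ico ((n:ℝ)*(T/N)) T :=
          fun τ hτ => ⟨hτ.1.le, lt_of_lt_of_le hτ.2 htn1T⟩
        have hcont : ContinuousOn (fun τ => ‖S (τ - (n:ℝ)*(T/N)) (Gv τ) - Gv ((n:ℝ)*(T/N))‖)
            (Set.Ioo ((n:ℝ)*(T/N)) (((n:ℝ)+1)*(T/N))) :=
          (((hFn_cont ((n:ℝ)*(T/N)) ⟨htn0, htnT.le⟩).mono hsub).sub continuousOn_const).norm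
        refine (hcont.aestronglyMeasurable measurableSet_Ioo).congr ?_
        refine ae_restrict_of_forall_mem measurableSet_Ioo (fun τ hτ => ?_)
        show ‖S (τ - (n:ℝ)*(T/N)) (Gv τ) - Gv ((n:ℝ)*(T/N))‖ = Φ N τ
        simp only [hΦ_def]
        rw [hθ_grid N n τ hτ.1 hτ.2]
      · have hsn : s n = ∅ := by simp only [hs_def, if_neg hn]
        rw [hsn, Measure.restrict_empty]
        exact aestronglyMeasurable_zero_measure _
    have hU : AEStronglyMeasurable (Φ N) (volume.restrict (⋃ n, s n)) :=
      aestronglyMeasurable_iUnion_iff.mpr hsm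
    have hcov : Set.Ioc (0:ℝ) T =ᵐ[volume] ⋃ n, s n := by
      refine (MeasureTheory.ae_eq_set).mpr ⟨?_, ?_⟩
      · refine measure_mono_null ?_
          ((Finset.finite_toSet ((Finset.range (N+1)).image (fun k : ℕ => (k:ℝ)*(T/N)))).measure_zero _)
        rintro τ ⟨hτIoc, hτU⟩
        simp only [Finset.coe_image, Set.mem_image, Finset.mem_coe, Finset.mem_range]
        by_cases hτT : τ = T
        · have hN0 : (N:ℝ) ≠ 0 := hNpos.ne'
          exact ⟨N, by omega, by rw [hτT]; field_simp⟩
        · have hτIoo : τ ∈ Set.Ioo (0:ℝ) T := ⟨hτIoc.1, lt_of_le_of_ne hτIoc.2 hτT⟩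
          obtain ⟨hθ0, hθle, hθlt, hidx⟩ := hθ_facts N hN1 τ hτIoo
          by_cases hτθ : τ = θ N τ
          · refine ⟨⌊τ * (N:ℝ) / T⌋.toNat, by omega, ?_⟩
            simpa only [hθ_def] using hτθ.symm
          · exfalso
            apply hτU
            refine Set.mem_iUnion.mpr ⟨⌊τ * (N:ℝ) / T⌋.toNat, ?_⟩
            simp only [hs_def, if_pos hidx]
            constructor
            · have : θ N τ < τ := lt_of_le_of_ne hθle (fun h => hτθ h.symm)
              simpa only [hθ_def] using this
            · have : τ < θ N τ + T/N := hθlt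
              have heq : θ N τ + T/N = ((⌊τ * (N:ℝ) / T⌋.toNat : ℕ) : ℝ) * (T/N) + T/N := by
                simp only [hθ_def]
              rw [heq] at this
              calc τ < ((⌊τ * (N:ℝ) / T⌋.toNat : ℕ) : ℝ) * (T/N) + T/N := this
                _ = (((⌊τ * (N:ℝ) / T⌋.toNat : ℕ) : ℝ) + 1) * (T/N) := by ring
      · have hsubU : (⋃ n, s n) ⊆ Set.Ioc (0:ℝ) T := by
          intro τ hτ
          obtain ⟨n, hn⟩ := Set.mem_iUnion.mp hτ
          by_cases hnN : n < N
          · rw [hs_def] at hn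
            simp only [if_pos hnN] at hn
            have htn0 : (0:ℝ) ≤ (n:ℝ)*(T/N) := by positivity
            have h1 : ((n:ℝ)+1) ≤ N := by exact_mod_cast hnN
            have htn1T : ((n:ℝ)+1)*(T/N) ≤ T := by
              calc ((n:ℝ)+1)*(T/N) ≤ (N:ℝ)*(T/N) := mul_le_mul_of_nonneg_right h1 hΔ.le
                _ = T := by field_simp
            exact ⟨lt_of_le_of_lt htn0 hn.1, le_trans hn.2.le htn1T⟩
          · rw [hs_def] at hn
            simp only [if_neg hnN] at hn
            exact absurd hn (Set.notMem_empty τ)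
        rw [Set.diff_eq_empty.mpr hsubU]
        exact measure_empty
    rw [Measure.restrict_congr_set hcov]
    exact hU
  have hDCT : Tendsto (fun N : ℕ => ∫ τ in (0:ℝ)..T, Φ N τ) atTop (nhds 0) := by
    have hfull : ∀ᵐ τ ∂(volume.restrict (Set.Ioc (0:ℝ) T)), τ ∈ Set.Ioo (0:ℝ) T := by
      filter_upwards [ae_restrict_mem measurableSet_Ioc, ae_restrict_of_ae (hae_ne T)] with τ h1 h2
      exact ⟨h1.1, lt_of_le_of_ne h1.2 h2⟩
    have h1 : Tendsto (fun k : ℕ => ∫ τ in Set.Ioc (0:ℝ) T, Φ (k+1) τ) atTop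
        (nhds (∫ τ in Set.Ioc (0:ℝ) T, (0:ℝ))) := by
      refine tendsto_integral_of_dominated_convergence (fun _ => M * CG + CG)
        (fun k => hΦ_meas (k+1) (by omega)) (integrable_const _) (fun k => ?_) ?_
      · filter_upwards [hfull] with τ hτ
        have h0 : 0 ≤ Φ (k+1) τ := by simp only [hΦ_def]; positivity
        rw [Real.norm_of_nonneg h0]
        exact hΦ_bound (k+1) (by omega) τ hτ
      · filter_upwards [hfull] with τ hτ
        exact (hΦ_tendsto τ hτ).comp (tendsto_add_atTop_nat 1)
    have h2 : Tendsto (fun N : ℕ => ∫ τ in Set.Ioc (0:ℝ) T, Φ N τ) atTop (nhds 0) := by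
      rw [← tendsto_add_atTop_iff_nat 1]
      simpa using h1
    have h3 : (fun N : ℕ => ∫ τ in (0:ℝ)..T, Φ N τ)
        = fun N : ℕ => ∫ τ in Set.Ioc (0:ℝ) T, Φ N τ := by
      funext N; exact intervalIntegral.integral_of_le hT.le
    rw [h3]; exact h2
  have key : ∀ N : ℕ, 1 ≤ N → |γ| * (T / N) ≤ 1/2 →
      (∑ n ∈ Finset.range N, ‖v ((n : ℝ) * (T / N)) - TS N n‖) ≤ 2 * ∫ τ in (0:ℝ)..T, Φ N τ := by
    intro N hN1 hhalf
    have hNpos : (0:ℝ) < N := by exact_mod_cast hN1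
    have hN0 : (N:ℝ) ≠ 0 := hNpos.ne'
    have hΔ : 0 < T / N := div_pos hT hNpos
    have hΦint : ∀ k : ℕ, k < N → IntervalIntegrable (Φ N) volume ((k:ℝ)*(T/N)) (((k:ℝ)+1)*(T/N)) := by
      intro k hk
      have hle : (k:ℝ)*(T/N) ≤ ((k:ℝ)+1)*(T/N) := by nlinarith
      have hFn := (hΦ_int_piece N hN1 k hk).sub (intervalIntegrable_const (c := Gv ((k:ℝ)*(T/N))))
      rw [intervalIntegrable_iff_integrableOn_Ioc_of_le hle] at hFn ⊢
      refine (hFn.norm).congr ?_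
      filter_upwards [ae_restrict_mem measurableSet_Ioc,
        ae_restrict_of_ae (hae_ne (((k:ℝ)+1)*(T/N)))] with τ hmem hne
      have hIoo : τ ∈ Set.Ioo ((k:ℝ)*(T/N)) (((k:ℝ)+1)*(T/N)) := ⟨hmem.1, lt_of_le_of_ne hmem.2 hne⟩
      show ‖S (τ - (k:ℝ)*(T/N)) (Gv τ) - Gv ((k:ℝ)*(T/N))‖ = Φ N τ
      simp only [hΦ_def]
      rw [hθ_grid N k τ hIoo.1 hIoo.2]
    have hstep : ∀ n : ℕ, n < N →
        ‖v ((n:ℝ)*(T/N)) - TS N n‖ ≤ 2 * ∫ τ in ((n:ℝ)*(T/N))..(((n:ℝ)+1)*(T/N)), Φ N τ := by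
      intro n hn
      have htn0 : (0:ℝ) ≤ (n:ℝ)*(T/N) := by positivity
      have h1n : ((n:ℝ)+1) ≤ N := by exact_mod_cast hn
      have htn1T : ((n:ℝ)+1)*(T/N) ≤ T := by
        calc ((n:ℝ)+1)*(T/N) ≤ (N:ℝ)*(T/N) := mul_le_mul_of_nonneg_right h1n hΔ.le
          _ = T := by field_simp
      have htnT : (n:ℝ)*(T/N) < T := by nlinarith
      have hle : (n:ℝ)*(T/N) ≤ ((n:ℝ)+1)*(T/N) := by nlinarith
      have hmild := hv_mild ((n:ℝ)*(T/N)) (((n:ℝ)+1)*(T/N)) htn0 hle htn1T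
      have hdiff : ((n:ℝ)+1)*(T/N) - (n:ℝ)*(T/N) = T/N := by ring
      rw [hdiff] at hmild
      have hI : (∫ τ in ((n:ℝ)*(T/N))..(((n:ℝ)+1)*(T/N)), S (τ - (n:ℝ)*(T/N)) (Gv τ))
          = S (T/N) (v (((n:ℝ)+1)*(T/N))) - v ((n:ℝ)*(T/N)) := by
        rw [hmild]; abel
      have hA : ‖v ((n:ℝ)*(T/N)) - TS N n‖ ≤
          2 * ‖S (T/N) (v (((n:ℝ)+1)*(T/N))) - v ((n:ℝ)*(T/N)) - (T/N) • Gv ((n:ℝ)*(T/N))‖ := by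
        refine stepA_aux (v ((n:ℝ)*(T/N))) (TS N n) (S (T/N) (v (((n:ℝ)+1)*(T/N))))
          (Gv ((n:ℝ)*(T/N))) (T/N) hΔ.le (fun x y => g ((n:ℝ)*(T/N)) x y) γ
          (fun x a b => hg_mono ((n:ℝ)*(T/N)) ⟨htn0, htnT⟩ x a b) hhalf ?_ ?_
        · exact hTS N hhalf n hn
        · exact hGv ((n:ℝ)*(T/N)) ⟨htn0, htnT.le⟩
      have hSInt := hΦ_int_piece N hN1 n hn
      have hB : S (T/N) (v (((n:ℝ)+1)*(T/N))) - v ((n:ℝ)*(T/N)) - (T/N) • Gv ((n:ℝ)*(T/N))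
          = ∫ τ in ((n:ℝ)*(T/N))..(((n:ℝ)+1)*(T/N)),
              (S (τ - (n:ℝ)*(T/N)) (Gv τ) - Gv ((n:ℝ)*(T/N))) := by
        rw [intervalIntegral.integral_sub hSInt intervalIntegrable_const, hI,
          intervalIntegral.integral_const, hdiff]
      have hC : ‖S (T/N) (v (((n:ℝ)+1)*(T/N))) - v ((n:ℝ)*(T/N)) - (T/N) • Gv ((n:ℝ)*(T/N))‖
          ≤ ∫ τ in ((n:ℝ)*(T/N))..(((n:ℝ)+1)*(T/N)),
              ‖S (τ - (n:ℝ)*(T/N)) (Gv τ) - Gv ((n:ℝ)*(T/N))‖ := by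
        rw [hB]
        refine le_trans (intervalIntegral.norm_integral_le_abs_integral_norm)
          (le_of_eq (abs_of_nonneg ?_))
        exact intervalIntegral.integral_nonneg hle (fun u hu => norm_nonneg _)
      have hD : (∫ τ in ((n:ℝ)*(T/N))..(((n:ℝ)+1)*(T/N)),
            ‖S (τ - (n:ℝ)*(T/N)) (Gv τ) - Gv ((n:ℝ)*(T/N))‖)
          = ∫ τ in ((n:ℝ)*(T/N))..(((n:ℝ)+1)*(T/N)), Φ N τ := by
        refine intervalIntegral.integral_congr_ae ?_
        filter_upwards [hae_ne (((n:ℝ)+1)*(T/N))] with τ hne hmem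
        rw [Set.uIoc_of_le hle] at hmem
        have hIoo : τ ∈ Set.Ioo ((n:ℝ)*(T/N)) (((n:ℝ)+1)*(T/N)) := ⟨hmem.1, lt_of_le_of_ne hmem.2 hne⟩
        simp only [hΦ_def]
        rw [hθ_grid N n τ hIoo.1 hIoo.2]
      calc ‖v ((n:ℝ)*(T/N)) - TS N n‖
          ≤ 2 * ‖S (T/N) (v (((n:ℝ)+1)*(T/N))) - v ((n:ℝ)*(T/N)) - (T/N) • Gv ((n:ℝ)*(T/N))‖ := hA
        _ ≤ 2 * ∫ τ in ((n:ℝ)*(T/N))..(((n:ℝ)+1)*(T/N)), Φ N τ := by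
            rw [← hD]; linarith
    have hsum : (∑ n ∈ Finset.range N, ∫ τ in ((n:ℝ)*(T/N))..(((n:ℝ)+1)*(T/N)), Φ N τ)
        = ∫ τ in (0:ℝ)..T, Φ N τ := by
      have hint : ∀ k < N, IntervalIntegrable (Φ N) volume
          ((fun k : ℕ => (k:ℝ)*(T/N)) k) ((fun k : ℕ => (k:ℝ)*(T/N)) (k+1)) := by
        intro k hk
        have h := hΦint k hk
        have e : (((k+1 : ℕ)):ℝ)*(T/N) = ((k:ℝ)+1)*(T/N) := by push_cast; ring
        show IntervalIntegrable (Φ N) volume ((k:ℝ)*(T/N)) ((((k+1 : ℕ)):ℝ)*(T/N))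
        rw [e]
        exact h
      have hadj := intervalIntegral.sum_integral_adjacent_intervals hint
      have ha0 : ((0:ℕ):ℝ)*(T/N) = 0 := by simp
      have haN : ((N:ℕ):ℝ)*(T/N) = T := by field_simp
      rw [ha0, haN] at hadj
      rw [← hadj]
      refine Finset.sum_congr rfl (fun k hk => ?_)
      congr 1
      push_cast; ring
    calc (∑ n ∈ Finset.range N, ‖v ((n : ℝ) * (T / N)) - TS N n‖)
        ≤ ∑ n ∈ Finset.range N, 2 * ∫ τ in ((n:ℝ)*(T/N))..(((n:ℝ)+1)*(T/N)), Φ N τ :=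
          Finset.sum_le_sum (fun n hn => hstep n (Finset.mem_range.mp hn))
      _ = 2 * ∑ n ∈ Finset.range N, ∫ τ in ((n:ℝ)*(T/N))..(((n:ℝ)+1)*(T/N)), Φ N τ := by
          rw [Finset.mul_sum]
      _ = 2 * ∫ τ in (0:ℝ)..T, Φ N τ := by rw [hsum]
  obtain ⟨N₁, hN₁⟩ := exists_nat_gt (2 * |γ| * T)
  have hγhalf : ∀ N : ℕ, max N₁ 1 ≤ N → |γ| * (T / N) ≤ 1/2 := by
    intro N hN
    have hN1 : 1 ≤ N := le_trans (le_max_right _ _) hN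
    have hNN₁ : N₁ ≤ N := le_trans (le_max_left _ _) hN
    have hNpos : (0:ℝ) < N := by exact_mod_cast hN1
    have heq : |γ| * (T/N) = (|γ| * T) / N := by ring
    rw [heq, div_le_iff₀ hNpos]
    have hcast : (N₁:ℝ) ≤ N := by exact_mod_cast hNN₁
    nlinarith [abs_nonneg γ]
  refine tendsto_of_tendsto_of_tendsto_of_le_of_le' (g := fun _ : ℕ => (0:ℝ))
      (h := fun N : ℕ => 2 * ∫ τ in (0:ℝ)..T, Φ N τ) tendsto_const_nhds ?_ ?_ ?_
  · simpa using hDCT.const_mul 2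
  · filter_upwards with N
    exact Finset.sum_nonneg (fun n _ => norm_nonneg _)
  · filter_upwards [eventually_ge_atTop (max N₁ 1)] with N hN
    exact key N (le_trans (le_max_right _ _) hN) (hγhalf N hN)
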